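/- (From Example 3.3 of the paper.) Let M = ℝ² ∖ {(0,0)} and let Ω : M → (0,∞) be given by Ω(x, t) = 1/(x² + t²), so that the metric is Ω²(−dt² + dx²). Then for every point q = (q₁, q₂) ∈ M with q₂ ≥ |q₁| one has d_{M,Ω}((0,−1), q) = ∞. -/

import Mathlib

open Set
open scoped ENNReal

/-- A vector of the Minkowski plane (first coordinate space, second coordinate time)
is future-directed timelike. -/
def FDTimelike (v : ℝ × ℝ) : Prop := |v.1| < v.2

/-- A future-directed timelike curve in `M ⊆ ℝ²` from `p` to `q`: a piecewise `C¹`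
map `γ : [0,1] → M` all of whose one-sided derivatives are future-directed timelike. -/
def IsTimelikeCurveIn (M : Set (ℝ × ℝ)) (γ : ℝ → ℝ × ℝ) (p q : ℝ × ℝ) : Prop :=
  γ 0 = p ∧ γ 1 = q ∧ (∀ s ∈ Set.Icc (0 : ℝ) 1, γ s ∈ M) ∧
  ∃ (m : ℕ) (t : ℕ → ℝ), 0 < m ∧ t 0 = 0 ∧ t m = 1 ∧ (∀ j < m, t j < t (j + 1)) ∧
    ∀ j < m,
      ContDiffOn ℝ 1 γ (Set.Icc (t j) (t (j + 1))) ∧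
      ∀ s ∈ Set.Icc (t j) (t (j + 1)),
        FDTimelike (derivWithin γ (Set.Icc (t j) (t (j + 1))) s)

/-- The conformal Lorentzian length of a curve with conformal factor `Ω`. -/
noncomputable def LlenConf (Ω : ℝ × ℝ → ℝ) (γ : ℝ → ℝ × ℝ) : ℝ :=
  ∫ s in (0 : ℝ)..1, Ω (γ s) * Real.sqrt ((deriv γ s).2 ^ 2 - (deriv γ s).1 ^ 2)

/-- The conformal Lorentzian distance of `M ⊆ ℝ²` with conformal factor `Ω`. -/
noncomputable def LorDistConf (M : Set (ℝ × ℝ)) (Ω : ℝ × ℝ → ℝ) (p q : ℝ × ℝ) : ℝ≥0∞ :=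
  ⨆ (γ : ℝ → ℝ × ℝ) (_ : IsTimelikeCurveIn M γ p q), ENNReal.ofReal (LlenConf Ω γ)

/-- The punctured Minkowski plane `ℝ² ∖ {(0,0)}`. -/
def Mpunct : Set (ℝ × ℝ) := {p : ℝ × ℝ | p ≠ (0, 0)}

/-- The conformal factor `Ω(x,t) = 1/(x² + t²)` of Example 3.3. -/
noncomputable def OmegaPunct (p : ℝ × ℝ) : ℝ := 1 / (p.1 ^ 2 + p.2 ^ 2)

/-- affine segment -/
def seg (p v : ℝ × ℝ) (s : ℝ) : ℝ × ℝ := (p.1 + s * v.1, p.2 + s * v.2)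

lemma seg_hasDerivAt (p v : ℝ × ℝ) (s : ℝ) : HasDerivAt (seg p v) v s := by
  have h1 : HasDerivAt (fun s : ℝ => p.1 + s * v.1) v.1 s :=
    by simpa using ((hasDerivAt_id s).mul_const v.1).const_add p.1
  have h2 : HasDerivAt (fun s : ℝ => p.2 + s * v.2) v.2 s :=
    by simpa using ((hasDerivAt_id s).mul_const v.2).const_add p.2
  exact h1.prodMk h2

lemma seg_contDiff (p v : ℝ × ℝ) : ContDiff ℝ 1 (seg p v) := by
  apply ContDiff.prodMk <;> fun_prop

lemma deriv_eq_of_eqOn_open {γ : ℝ → ℝ × ℝ} {U : Set ℝ} (hU : IsOpen U) {p v : ℝ × ℝ} {s : ℝ}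
    (h : Set.EqOn γ (seg p v) U) (hs : s ∈ U) : deriv γ s = v := by
  have he : γ =ᶠ[nhds s] seg p v := Filter.eventuallyEq_of_mem (hU.mem_nhds hs) h
  rw [he.deriv_eq, (seg_hasDerivAt p v s).deriv]

lemma derivWithin_eq_of_eqOn {γ : ℝ → ℝ × ℝ} {a b : ℝ} (hab : a < b) {p v : ℝ × ℝ} {s : ℝ}
    (h : Set.EqOn γ (seg p v) (Set.Icc a b)) (hs : s ∈ Set.Icc a b) :
    derivWithin γ (Set.Icc a b) s = v := by
  rw [derivWithin_congr h (h hs)]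
  rw [(seg_hasDerivAt p v s).differentiableAt.derivWithin (uniqueDiffOn_Icc hab s hs),
    (seg_hasDerivAt p v s).deriv]

lemma contDiffOn_of_eqOn {γ : ℝ → ℝ × ℝ} {S : Set ℝ} {p v : ℝ × ℝ}
    (h : Set.EqOn γ (seg p v) S) : ContDiffOn ℝ 1 γ S :=
  ((seg_contDiff p v).contDiffOn).congr h

/-- integrand along a segment -/
noncomputable def G (p v : ℝ × ℝ) (s : ℝ) : ℝ :=
  OmegaPunct (seg p v s) * Real.sqrt (v.2 ^ 2 - v.1 ^ 2)

lemma G_continuousOn (p v : ℝ × ℝ) (S : Set ℝ) (h : ∀ s ∈ S, seg p v s ≠ ((0 : ℝ), (0 : ℝ))) :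
    ContinuousOn (G p v) S := by
  unfold G OmegaPunct
  apply ContinuousOn.mul _ continuousOn_const
  apply ContinuousOn.div continuousOn_const
  · simp only [seg]; fun_prop
  · intro s hs hzero
    apply h s hs
    have h1 : (seg p v s).1 = 0 := by nlinarith [sq_nonneg (seg p v s).1, sq_nonneg (seg p v s).2]
    have h2 : (seg p v s).2 = 0 := by nlinarith [sq_nonneg (seg p v s).1, sq_nonneg (seg p v s).2]
    exact Prod.ext h1 h2

noncomputable def pcurve (e : ℝ) (q : ℝ × ℝ) (s : ℝ) : ℝ × ℝ :=
  if s ≤ 1/3 then (3*s*e, -1 + 3*s/2)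
  else if s ≤ 2/3 then (e, (3*s-2)/2)
  else (e + (3*s-2)*(q.1 - e), (3*s-2)*q.2)

lemma pcurve_eq1 (e : ℝ) (q : ℝ × ℝ) :
    Set.EqOn (pcurve e q) (seg ((0 : ℝ), (-1 : ℝ)) (3*e, 3/2)) (Set.Iic (1/3 : ℝ)) := by
  intro s hs
  simp only [pcurve, seg, if_pos (mem_Iic.1 hs)]
  rw [Prod.mk.injEq]; constructor <;> ring

lemma pcurve_eq2 (e : ℝ) (q : ℝ × ℝ) :
    Set.EqOn (pcurve e q) (seg (e, (-1 : ℝ)) ((0 : ℝ), 3/2)) (Set.Icc (1/3 : ℝ) (2/3 : ℝ)) := by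
  intro s hs
  obtain ⟨hl, hr⟩ := hs
  by_cases h1 : s ≤ 1/3
  · have : s = 1/3 := le_antisymm h1 hl
    subst this
    simp only [pcurve, seg]
    norm_num
  · simp only [pcurve, seg, if_neg h1, if_pos hr]
    rw [Prod.mk.injEq]; constructor <;> ring

lemma pcurve_eq3 (e : ℝ) (q : ℝ × ℝ) :
    Set.EqOn (pcurve e q) (seg (e - 2*(q.1 - e), -2*q.2) (3*(q.1 - e), 3*q.2))
      (Set.Ici (2/3 : ℝ)) := by
  intro s hs
  simp only [mem_Ici] at hs
  by_cases h1 : s ≤ 1/3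
  · linarith
  by_cases h2 : s ≤ 2/3
  · have : s = 2/3 := le_antisymm h2 hs
    subst this
    simp only [pcurve, seg, if_neg h1, if_pos le_rfl]
    rw [Prod.mk.injEq]; constructor <;> ring
  · simp only [pcurve, seg, if_neg h1, if_neg h2]
    rw [Prod.mk.injEq]; constructor <;> ring

lemma pcurve_mem (e : ℝ) (q : ℝ × ℝ) (he : e ≠ 0) (hq2 : 0 < q.2) :
    ∀ s ∈ Set.Icc (0 : ℝ) 1, pcurve e q s ∈ {p : ℝ × ℝ | p ≠ (0, 0)} := by
  intro s hs
  simp only [mem_setOf_eq, pcurve]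
  split_ifs with h1 h2
  · intro h
    have := congrArg Prod.snd h
    simp only at this
    linarith
  · intro h
    have := congrArg Prod.fst h
    simp only at this
    exact he this
  · intro h
    have := congrArg Prod.snd h
    simp only at this
    push_neg at h2
    nlinarith

lemma ae_ne_pt (c : ℝ) : ∀ᵐ s : ℝ, s ≠ c := by
  refine MeasureTheory.ae_iff.2 ?_
  simp only [ne_eq, not_not, setOf_eq_eq_singleton]
  exact Real.volume_singleton

set_option maxHeartbeats 1000000 in
lemma llen_lower (q : ℝ × ℝ) (hq2 : 0 < q.2) (n : ℕ) (hn : 3 ≤ (n : ℝ)) (e : ℝ)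
    (he : e ≠ 0) (he2 : e ^ 2 = 1 / (n : ℝ) ^ 2) :
    (n : ℝ) / 2 ≤ ∫ s in (0 : ℝ)..1,
      OmegaPunct (pcurve e q s) *
        Real.sqrt ((deriv (pcurve e q) s).2 ^ 2 - (deriv (pcurve e q) s).1 ^ 2) := by
  have hn0 : (0 : ℝ) < n := by linarith
  set γ := pcurve e q with hγ
  set f : ℝ → ℝ := fun s =>
    OmegaPunct (γ s) * Real.sqrt ((deriv γ s).2 ^ 2 - (deriv γ s).1 ^ 2) with hf
  have hfnonneg : ∀ s, 0 ≤ f s := by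
    intro s
    apply mul_nonneg _ (Real.sqrt_nonneg _)
    unfold OmegaPunct
    positivity
  obtain ⟨a, ha⟩ : ∃ a : ℝ, a = 2/3 - 2/(3*(n:ℝ)) := ⟨_, rfl⟩
  have ha13 : 1/3 < a := by
    rw [ha]
    have : 2/(3*(n:ℝ)) ≤ 2/9 := by
      apply div_le_div_of_nonneg_left (by norm_num) (by norm_num) (by linarith)
    linarith
  have ha23 : a < 2/3 := by
    rw [ha]
    have : 0 < 2/(3*(n:ℝ)) := by positivity
    linarith
  -- pointwise identities on open pieces
  have hfd1 : ∀ s ∈ Set.Iio (1/3 : ℝ), f s = G ((0:ℝ), (-1:ℝ)) (3*e, 3/2) s := by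
    intro s hs
    have hd : deriv γ s = (3*e, 3/2) :=
      deriv_eq_of_eqOn_open isOpen_Iio ((pcurve_eq1 e q).mono Iio_subset_Iic_self) hs
    have hv : γ s = seg ((0:ℝ), (-1:ℝ)) (3*e, 3/2) s := pcurve_eq1 e q (Iio_subset_Iic_self hs)
    simp only [hf, G, hd, hv]
  have hfd2 : ∀ s ∈ Set.Ioo (1/3 : ℝ) (2/3 : ℝ), f s = G (e, (-1:ℝ)) ((0:ℝ), 3/2) s := by
    intro s hs
    have hd : deriv γ s = ((0:ℝ), 3/2) :=
      deriv_eq_of_eqOn_open isOpen_Ioo ((pcurve_eq2 e q).mono Ioo_subset_Icc_self) hs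
    have hv : γ s = seg (e, (-1:ℝ)) ((0:ℝ), 3/2) s := pcurve_eq2 e q (Ioo_subset_Icc_self hs)
    simp only [hf, G, hd, hv]
  have hfd3 : ∀ s ∈ Set.Ioi (2/3 : ℝ), f s = G (e - 2*(q.1 - e), -2*q.2) (3*(q.1 - e), 3*q.2) s := by
    intro s hs
    have hd : deriv γ s = (3*(q.1 - e), 3*q.2) :=
      deriv_eq_of_eqOn_open isOpen_Ioi ((pcurve_eq3 e q).mono Ioi_subset_Ici_self) hs
    have hv : γ s = seg (e - 2*(q.1 - e), -2*q.2) (3*(q.1 - e), 3*q.2) s :=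
      pcurve_eq3 e q (Ioi_subset_Ici_self hs)
    simp only [hf, G, hd, hv]
  -- continuity / integrability of the G's on the relevant intervals
  have hG1 : IntervalIntegrable (G ((0:ℝ), (-1:ℝ)) (3*e, 3/2)) MeasureTheory.volume 0 (1/3) := by
    apply ContinuousOn.intervalIntegrable
    apply G_continuousOn
    intro s hs hzero
    rw [Set.uIcc_of_le (by norm_num : (0:ℝ) ≤ 1/3)] at hs
    have h2 := congrArg Prod.snd hzero
    simp only [seg] at h2
    norm_num at h2
    have := hs.2
    linarith
  have hG2 : IntervalIntegrable (G (e, (-1:ℝ)) ((0:ℝ), 3/2)) MeasureTheory.volume (1/3) (2/3) := by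
    apply ContinuousOn.intervalIntegrable
    apply G_continuousOn
    intro s hs hzero
    have h1 := congrArg Prod.fst hzero
    simp only [seg] at h1
    norm_num at h1
    exact he h1
  have hG3 : IntervalIntegrable (G (e - 2*(q.1 - e), -2*q.2) (3*(q.1 - e), 3*q.2))
      MeasureTheory.volume (2/3) 1 := by
    apply ContinuousOn.intervalIntegrable
    apply G_continuousOn
    intro s hs hzero
    have h1 := congrArg Prod.fst hzero
    have h2 := congrArg Prod.snd hzero
    simp only [seg] at h1 h2
    norm_num at h1 h2
    have hs23 : s = 2/3 := by
      have h3 : q.2 * (s * 3 - 2) = 0 := by linear_combination h2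
      rcases mul_eq_zero.1 h3 with h | h
      · linarith
      · linarith
    apply he
    rw [hs23] at h1
    linear_combination h1
  -- interval integrability of f on the pieces
  have hI1 : IntervalIntegrable f MeasureTheory.volume 0 (1/3) := by
    apply hG1.congr_ae
    filter_upwards [MeasureTheory.ae_restrict_of_ae (ae_ne_pt (1/3)),
      MeasureTheory.ae_restrict_mem measurableSet_uIoc] with s hsne hsmem
    rw [Set.uIoc_of_le (by norm_num : (0:ℝ) ≤ 1/3)] at hsmem
    exact (hfd1 s (lt_of_le_of_ne hsmem.2 hsne)).symm
  have hI2 : IntervalIntegrable f MeasureTheory.volume (1/3) (2/3) := by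
    apply hG2.congr_ae
    filter_upwards [MeasureTheory.ae_restrict_of_ae (ae_ne_pt (2/3)),
      MeasureTheory.ae_restrict_mem measurableSet_uIoc] with s hsne hsmem
    rw [Set.uIoc_of_le (by norm_num : (1:ℝ)/3 ≤ 2/3)] at hsmem
    exact (hfd2 s ⟨hsmem.1, lt_of_le_of_ne hsmem.2 hsne⟩).symm
  have hI3 : IntervalIntegrable f MeasureTheory.volume (2/3) 1 := by
    apply hG3.congr_ae
    filter_upwards [MeasureTheory.ae_restrict_mem measurableSet_uIoc] with s hsmem
    rw [Set.uIoc_of_le (by norm_num : (2:ℝ)/3 ≤ 1)] at hsmem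
    exact (hfd3 s hsmem.1).symm
  have hIa : IntervalIntegrable f MeasureTheory.volume (1/3) a := by
    apply hI2.mono_set
    rw [Set.uIcc_of_le (by linarith : (1:ℝ)/3 ≤ a), Set.uIcc_of_le (by norm_num : (1:ℝ)/3 ≤ 2/3)]
    exact Set.Icc_subset_Icc le_rfl (le_of_lt ha23)
  have hIb : IntervalIntegrable f MeasureTheory.volume a (2/3) := by
    apply hI2.mono_set
    rw [Set.uIcc_of_le (by linarith : a ≤ 2/3), Set.uIcc_of_le (by norm_num : (1:ℝ)/3 ≤ 2/3)]
    exact Set.Icc_subset_Icc (le_of_lt ha13) le_rfl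
  -- split the integral
  have hsplit : ∫ s in (0:ℝ)..1, f s =
      (∫ s in (0:ℝ)..(1/3), f s) + ((∫ s in (1/3:ℝ)..a, f s) +
        ((∫ s in a..(2/3:ℝ), f s) + ∫ s in (2/3:ℝ)..1, f s)) := by
    rw [intervalIntegral.integral_add_adjacent_intervals hIb hI3,
      intervalIntegral.integral_add_adjacent_intervals hIa (hIb.trans hI3),
      intervalIntegral.integral_add_adjacent_intervals hI1 ((hIa.trans hIb).trans hI3)]
  -- nonnegativity of three of the four pieces
  have hnn1 : 0 ≤ ∫ s in (0:ℝ)..(1/3), f s :=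
    intervalIntegral.integral_nonneg (by norm_num) (fun u _ => hfnonneg u)
  have hnn2 : 0 ≤ ∫ s in (1/3:ℝ)..a, f s :=
    intervalIntegral.integral_nonneg (le_of_lt ha13) (fun u _ => hfnonneg u)
  have hnn4 : 0 ≤ ∫ s in (2/3:ℝ)..1, f s :=
    intervalIntegral.integral_nonneg (by norm_num) (fun u _ => hfnonneg u)
  -- the key piece
  have hkey : (n : ℝ) / 2 ≤ ∫ s in a..(2/3:ℝ), f s := by
    have hcongr : ∫ s in a..(2/3:ℝ), f s = ∫ s in a..(2/3:ℝ), G (e, (-1:ℝ)) ((0:ℝ), 3/2) s := by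
      apply intervalIntegral.integral_congr_ae
      filter_upwards [ae_ne_pt (2/3)] with s hsne hsmem
      rw [Set.uIoc_of_le (le_of_lt ha23)] at hsmem
      exact hfd2 s ⟨lt_trans ha13 hsmem.1, lt_of_le_of_ne hsmem.2 hsne⟩
    rw [hcongr]
    have hGint : IntervalIntegrable (G (e, (-1:ℝ)) ((0:ℝ), 3/2)) MeasureTheory.volume a (2/3) := by
      apply hG2.mono_set
      rw [Set.uIcc_of_le (by linarith : a ≤ 2/3), Set.uIcc_of_le (by norm_num : (1:ℝ)/3 ≤ 2/3)]
      exact Set.Icc_subset_Icc (le_of_lt ha13) le_rfl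
    have hconst : ∫ _ in a..(2/3:ℝ), (3 * (n:ℝ)^2 / 4) = (n : ℝ) / 2 := by
      rw [intervalIntegral.integral_const, smul_eq_mul, ha]
      field_simp
      ring
    calc (n : ℝ) / 2 = ∫ _ in a..(2/3:ℝ), (3 * (n:ℝ)^2 / 4) := hconst.symm
      _ ≤ ∫ s in a..(2/3:ℝ), G (e, (-1:ℝ)) ((0:ℝ), 3/2) s := by
        apply intervalIntegral.integral_mono_on (le_of_lt ha23)
          intervalIntegrable_const hGint
        intro s hs
        have hsqrt : Real.sqrt ((((0:ℝ), (3:ℝ)/2) : ℝ × ℝ).2 ^ 2 - (((0:ℝ), (3:ℝ)/2) : ℝ × ℝ).1 ^ 2)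
            = 3/2 := by
          have h1 : ((((0:ℝ), (3:ℝ)/2) : ℝ × ℝ).2 ^ 2 - (((0:ℝ), (3:ℝ)/2) : ℝ × ℝ).1 ^ 2)
              = ((3:ℝ)/2)^2 := by norm_num
          rw [h1, Real.sqrt_sq (by norm_num : (0:ℝ) ≤ 3/2)]
        have hfst : (seg (e, (-1:ℝ)) ((0:ℝ), 3/2) s).1 = e := by simp [seg]
        obtain ⟨t, ht⟩ : ∃ t : ℝ, t = -1 + s * (3/2) := ⟨_, rfl⟩
        have hsnd : (seg (e, (-1:ℝ)) ((0:ℝ), 3/2) s).2 = t := by rw [ht]; simp [seg]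
        have hta : -(1/(n:ℝ)) ≤ t := by
          have h32a : (3:ℝ)/2 * a = 1 - 1/(n:ℝ) := by
            rw [ha]; field_simp
          have := hs.1
          rw [ht]
          linarith
        have htb : t ≤ 0 := by
          have := hs.2
          rw [ht]
          linarith
        have htn : -1 ≤ t * (n:ℝ) := by
          have h := mul_le_mul_of_nonneg_right hta (le_of_lt hn0)
          have h' : (1/(n:ℝ)) * (n:ℝ) = 1 := by field_simp
          nlinarith [h, h']
        have htn0 : t * (n:ℝ) ≤ 0 := mul_nonpos_of_nonpos_of_nonneg htb (le_of_lt hn0)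
        have htsq2 : t^2 * (n:ℝ)^2 ≤ 1 := by
          nlinarith [mul_nonneg (by linarith : (0:ℝ) ≤ 1 + t * (n:ℝ))
            (by linarith : (0:ℝ) ≤ -(t * (n:ℝ)))]
        have he2n : e^2 * (n:ℝ)^2 = 1 := by
          have h1 : e^2 * (n:ℝ)^2 = (1/(n:ℝ)^2) * (n:ℝ)^2 := by rw [he2]
          have h2 : (1/(n:ℝ)^2) * (n:ℝ)^2 = 1 := by field_simp
          rw [h1, h2]
        have hDn : (e^2 + t^2) * (n:ℝ)^2 ≤ 2 := by nlinarith [htsq2, he2n]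
        have hDpos : 0 < e^2 + t^2 := by
          have h1 : 0 < e^2 := lt_of_le_of_ne (sq_nonneg e) (Ne.symm (pow_ne_zero 2 he))
          nlinarith [sq_nonneg t]
        show 3 * (n:ℝ)^2 / 4 ≤ G (e, (-1:ℝ)) ((0:ℝ), 3/2) s
        rw [G, hsqrt, OmegaPunct, hfst, hsnd]
        rw [div_mul_eq_mul_div, one_mul, le_div_iff₀ hDpos]
        nlinarith [hDn]
  rw [hsplit]
  linarith

lemma pcurve_isTimelike (q : ℝ × ℝ) (hq2 : 0 < q.2) (e : ℝ) (he : e ≠ 0) (he13 : |e| ≤ 1/3)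
    (habs : |q.1 - e| < q.2) :
    IsTimelikeCurveIn Mpunct (pcurve e q) ((0 : ℝ), (-1 : ℝ)) q := by
  refine ⟨?_, ?_, pcurve_mem e q he hq2, 3,
    (fun j => if j = 0 then 0 else if j = 1 then 1/3 else if j = 2 then 2/3 else 1),
    by norm_num, by norm_num, by norm_num, ?_, ?_⟩
  · show pcurve e q 0 = _
    simp only [pcurve]
    norm_num
  · show pcurve e q 1 = q
    simp only [pcurve]
    norm_num
  · intro j hj
    interval_cases j <;> norm_num
  · intro j hj
    interval_cases j
    · show ContDiffOn ℝ 1 (pcurve e q) (Set.Icc (0:ℝ) (1/3)) ∧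
        ∀ s ∈ Set.Icc (0:ℝ) (1/3), FDTimelike (derivWithin (pcurve e q) (Set.Icc (0:ℝ) (1/3)) s)
      have h : Set.EqOn (pcurve e q) (seg ((0:ℝ), (-1:ℝ)) (3*e, 3/2)) (Set.Icc (0:ℝ) (1/3)) :=
        (pcurve_eq1 e q).mono Icc_subset_Iic_self
      refine ⟨contDiffOn_of_eqOn h, fun s hs => ?_⟩
      rw [derivWithin_eq_of_eqOn (by norm_num) h hs]
      show |((3*e, (3:ℝ)/2) : ℝ × ℝ).1| < ((3*e, (3:ℝ)/2) : ℝ × ℝ).2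
      simp only
      rw [abs_mul]
      rw [show |(3:ℝ)| = 3 by norm_num]
      linarith
    · show ContDiffOn ℝ 1 (pcurve e q) (Set.Icc (1/3:ℝ) (2/3)) ∧
        ∀ s ∈ Set.Icc (1/3:ℝ) (2/3),
          FDTimelike (derivWithin (pcurve e q) (Set.Icc (1/3:ℝ) (2/3)) s)
      have h : Set.EqOn (pcurve e q) (seg (e, (-1:ℝ)) ((0:ℝ), 3/2)) (Set.Icc (1/3:ℝ) (2/3)) :=
        pcurve_eq2 e q
      refine ⟨contDiffOn_of_eqOn h, fun s hs => ?_⟩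
      rw [derivWithin_eq_of_eqOn (by norm_num) h hs]
      show |(((0:ℝ), (3:ℝ)/2) : ℝ × ℝ).1| < (((0:ℝ), (3:ℝ)/2) : ℝ × ℝ).2
      simp
    · show ContDiffOn ℝ 1 (pcurve e q) (Set.Icc (2/3:ℝ) 1) ∧
        ∀ s ∈ Set.Icc (2/3:ℝ) 1, FDTimelike (derivWithin (pcurve e q) (Set.Icc (2/3:ℝ) 1) s)
      have h : Set.EqOn (pcurve e q) (seg (e - 2*(q.1 - e), -2*q.2) (3*(q.1 - e), 3*q.2))
          (Set.Icc (2/3:ℝ) 1) := (pcurve_eq3 e q).mono Icc_subset_Ici_self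
      refine ⟨contDiffOn_of_eqOn h, fun s hs => ?_⟩
      rw [derivWithin_eq_of_eqOn (by norm_num) h hs]
      show |((3*(q.1 - e), 3*q.2) : ℝ × ℝ).1| < ((3*(q.1 - e), 3*q.2) : ℝ × ℝ).2
      simp only
      rw [abs_mul]
      rw [show |(3:ℝ)| = 3 by norm_num]
      linarith

/-- Example 3.3: with the metric `Ω²(−dt² + dx²)` on `ℝ² ∖ {(0,0)}`, every point `q`
of the closed future cone of the origin is at infinite conformal Lorentzian distance
from `(0,−1)`. -/
theorem stmt_13 (q : ℝ × ℝ) (hq : q ≠ (0, 0)) (hcone : |q.1| ≤ q.2) :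
    LorDistConf Mpunct OmegaPunct ((0 : ℝ), (-1 : ℝ)) q = ⊤ := by
  have hq2 : 0 < q.2 := by
    rcases lt_or_eq_of_le (le_trans (abs_nonneg q.1) hcone) with h | h
    · exact h
    · exfalso
      apply hq
      have hq1 : q.1 = 0 := abs_eq_zero.1 (le_antisymm (h ▸ hcone) (abs_nonneg _))
      exact Prod.ext hq1 h.symm
  apply ENNReal.eq_top_of_forall_nnreal_le
  intro r
  obtain ⟨n, hn⟩ := exists_nat_gt (max (max 3 (1/q.2)) (2*(r:ℝ)))
  have h3 := (le_max_left (3:ℝ) (1/q.2)).trans (le_max_left _ (2*(r:ℝ)))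
  have hq1n' := (le_max_right (3:ℝ) (1/q.2)).trans (le_max_left _ (2*(r:ℝ)))
  have hrn' := le_max_right (max (3:ℝ) (1/q.2)) (2*(r:ℝ))
  have hn3 : 3 ≤ (n:ℝ) := by linarith
  have hq1n : 1/q.2 < n := by linarith
  have hrn : 2*(r:ℝ) < n := by linarith
  have hn0 : (0:ℝ) < n := by linarith
  have hinvq : 1/(n:ℝ) < q.2 := by
    rw [div_lt_iff₀ hn0]
    have := (div_lt_iff₀ hq2).1 hq1n
    linarith [mul_comm q.2 (n:ℝ)]
  obtain ⟨e, hedef⟩ : ∃ e : ℝ, e = (if q.1 < 0 then (-1:ℝ) else 1)/n := ⟨_, rfl⟩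
  have he2 : e^2 = 1/(n:ℝ)^2 := by rw [hedef]; split_ifs <;> ring
  have he : e ≠ 0 := by
    rw [hedef]
    split_ifs
    · exact div_ne_zero (by norm_num) (ne_of_gt hn0)
    · exact div_ne_zero (by norm_num) (ne_of_gt hn0)
  have he13 : |e| ≤ 1/3 := by
    rw [hedef]
    have habs1 : |(if q.1 < 0 then (-1:ℝ) else 1)| = 1 := by split_ifs <;> norm_num
    rw [abs_div, habs1, abs_of_pos hn0, div_le_div_iff₀ hn0 (by norm_num : (0:ℝ) < 3)]
    linarith
  have hneg : (-1:ℝ)/(n:ℝ) = -(1/(n:ℝ)) := by ring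
  have hpos1n : 0 < 1/(n:ℝ) := by positivity
  have habs : |q.1 - e| < q.2 := by
    rw [hedef]
    split_ifs with h
    · rw [abs_sub_lt_iff]
      constructor
      · rw [hneg]; linarith
      · rw [hneg]; linarith [neg_abs_le q.1]
    · push_neg at h
      rw [abs_sub_lt_iff]
      constructor
      · linarith [le_abs_self q.1]
      · linarith
  have hcurve := pcurve_isTimelike q hq2 e he he13 habs
  have hlen := llen_lower q hq2 n hn3 e he he2
  have hofreal : (r : ℝ≥0∞) ≤ ENNReal.ofReal (LlenConf OmegaPunct (pcurve e q)) := by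
    rw [← ENNReal.ofReal_coe_nnreal]
    apply ENNReal.ofReal_le_ofReal
    have hL : LlenConf OmegaPunct (pcurve e q) = ∫ s in (0 : ℝ)..1,
        OmegaPunct (pcurve e q s) *
          Real.sqrt ((deriv (pcurve e q) s).2 ^ 2 - (deriv (pcurve e q) s).1 ^ 2) := rfl
    rw [hL]
    linarith
  refine le_trans hofreal ?_
  rw [LorDistConf]
  exact le_iSup₂ (f := fun γ' (_ : IsTimelikeCurveIn Mpunct γ' ((0:ℝ), (-1:ℝ)) q) =>
    ENNReal.ofReal (LlenConf OmegaPunct γ')) (pcurve e q) hcurve
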